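/- Let p : A(Γ₁) → A(Γ₁) be the endomorphism determined by sending the generator f to the identity element and sending every other generator a, b, c, d, e, g, h to itself (this is well-defined since every defining relator of A(Γ₁) maps to a relation holding in A(Γ₁)). Then the restriction of p to the subgroup of A(Γ₁) generated by {a, b, c, d, ef, h} is injective. -/

import Mathlib

open scoped commutatorElement

/-- The defining relators of the right-angled Artin group on a simple graph `G`:
the commutators of the generators corresponding to adjacent vertices. -/
def raagRels {V : Type*} (G : SimpleGraph V) : Set (FreeGroup V) :=
  {r | ∃ u v : V, G.Adj u v ∧ r = ⁅FreeGroup.of u, FreeGroup.of v⁆}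

/-- The right-angled Artin group on a simple graph `G`. -/
abbrev RAAG {V : Type*} (G : SimpleGraph V) : Type _ := PresentedGroup (raagRels G)

/-- The generator of the right-angled Artin group corresponding to a vertex. -/
def gen {V : Type*} (G : SimpleGraph V) (v : V) : RAAG G := PresentedGroup.of v

/-- Vertices of the graph Γ₁. -/
inductive V1 : Type | a | b | c | d | e | f | g | h
deriving DecidableEq

/-- The graph Γ₁ with edges ab, bc, cd, da, ea, eb, ec, ed, fa, fb, fc, fd, ef,
ga, gb, gc, ge, ha, hb, hd, hf. -/
def G1 : SimpleGraph V1 := SimpleGraph.fromRel (fun u v => (u, v) ∈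
  ([(.a,.b),(.b,.c),(.c,.d),(.d,.a),
    (.e,.a),(.e,.b),(.e,.c),(.e,.d),
    (.f,.a),(.f,.b),(.f,.c),(.f,.d),(.e,.f),
    (.g,.a),(.g,.b),(.g,.c),(.g,.e),
    (.h,.a),(.h,.b),(.h,.d),(.h,.f)] : List (V1 × V1)))

/-- Adjacent generators commute in a RAAG. -/
lemma gen_comm {u v : V1} (h : G1.Adj u v) : Commute (gen G1 u) (gen G1 v) := by
  have hr : (⁅FreeGroup.of u, FreeGroup.of v⁆ : FreeGroup V1) ∈ raagRels G1 := ⟨u, v, h, rfl⟩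
  have h1 : (PresentedGroup.mk (raagRels G1)) ⁅FreeGroup.of u, FreeGroup.of v⁆ = 1 :=
    (QuotientGroup.eq_one_iff _).mpr (Subgroup.subset_normalClosure hr)
  rw [map_commutatorElement] at h1
  exact commutatorElement_eq_one_iff_commute.mp h1

/-- Images of the generators under the projection `p` (killing `f`). -/
def pmap : V1 → RAAG G1
  | .f => 1
  | v => gen G1 v

/-- Images of the generators under the section `q` (sending `e` to `ef`, killing `f` and `g`). -/
def qmap : V1 → RAAG G1
  | .f => 1
  | .g => 1
  | .e => gen G1 V1.e * gen G1 V1.f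
  | v => gen G1 v

lemma pcomm : ∀ u v : V1, G1.Adj u v → Commute (pmap u) (pmap v) := by
  intro u v h
  cases u <;> cases v <;> simp only [pmap] <;>
    first
      | exact Commute.one_left _
      | exact Commute.one_right _
      | exact gen_comm h

lemma qcomm : ∀ u v : V1, G1.Adj u v → Commute (qmap u) (qmap v) := by
  intro u v h
  cases u <;> cases v <;> simp only [qmap] <;>
    first
      | exact Commute.one_left _
      | exact Commute.one_right _
      | exact gen_comm h
      | (exfalso; revert h; simp [G1]; done)
      | exact Commute.mul_left (gen_comm (by simp [G1])) (gen_comm (by simp [G1]))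
      | exact Commute.mul_right (gen_comm (by simp [G1])) (gen_comm (by simp [G1]))

lemma prels : ∀ r ∈ raagRels G1, FreeGroup.lift pmap r = 1 := by
  rintro r ⟨u, v, huv, rfl⟩
  rw [map_commutatorElement, FreeGroup.lift_apply_of, FreeGroup.lift_apply_of]
  exact commutatorElement_eq_one_iff_commute.mpr (pcomm u v huv)

lemma qrels : ∀ r ∈ raagRels G1, FreeGroup.lift qmap r = 1 := by
  rintro r ⟨u, v, huv, rfl⟩
  rw [map_commutatorElement, FreeGroup.lift_apply_of, FreeGroup.lift_apply_of]
  exact commutatorElement_eq_one_iff_commute.mpr (qcomm u v huv)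

/-- The projection `p`. -/
def pHom : RAAG G1 →* RAAG G1 := PresentedGroup.toGroup prels

/-- The section `q`. -/
def qHom : RAAG G1 →* RAAG G1 := PresentedGroup.toGroup qrels

@[simp] lemma pHom_gen (v : V1) : pHom (gen G1 v) = pmap v := PresentedGroup.toGroup.of prels

@[simp] lemma qHom_gen (v : V1) : qHom (gen G1 v) = qmap v := PresentedGroup.toGroup.of qrels

/-- There is a (well-defined) endomorphism `p` of `A(Γ₁)` killing the generator `f` and
fixing every other generator, and the restriction of `p` to the subgroup generated by
`{a, b, c, d, ef, h}` is injective. -/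
theorem projection_injOn_subgroup :
    ∃ p : RAAG G1 →* RAAG G1,
      p (gen G1 V1.f) = 1 ∧
      p (gen G1 V1.a) = gen G1 V1.a ∧
      p (gen G1 V1.b) = gen G1 V1.b ∧
      p (gen G1 V1.c) = gen G1 V1.c ∧
      p (gen G1 V1.d) = gen G1 V1.d ∧
      p (gen G1 V1.e) = gen G1 V1.e ∧
      p (gen G1 V1.g) = gen G1 V1.g ∧
      p (gen G1 V1.h) = gen G1 V1.h ∧
      Set.InjOn p (Subgroup.closure
        ({gen G1 V1.a, gen G1 V1.b, gen G1 V1.c, gen G1 V1.d,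
          gen G1 V1.e * gen G1 V1.f, gen G1 V1.h} : Set (RAAG G1)) : Subgroup (RAAG G1)) := by
  refine ⟨pHom, by simp [pmap], by simp [pmap], by simp [pmap], by simp [pmap], by simp [pmap],
    by simp [pmap], by simp [pmap], by simp [pmap], ?_⟩
  have hfix : ∀ x ∈ (Subgroup.closure
      ({gen G1 V1.a, gen G1 V1.b, gen G1 V1.c, gen G1 V1.d,
        gen G1 V1.e * gen G1 V1.f, gen G1 V1.h} : Set (RAAG G1))),
      qHom (pHom x) = x := by
    intro x hx
    induction hx using Subgroup.closure_induction with
    | mem y hy =>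
        simp only [Set.mem_insert_iff, Set.mem_singleton_iff] at hy
        rcases hy with rfl | rfl | rfl | rfl | rfl | rfl <;>
          simp [pmap, qmap]
    | one => simp
    | mul a b _ _ ha hb => simp [map_mul, ha, hb]
    | inv a _ ha => simp [map_inv, ha]
  intro x hx y hy hxy
  calc x = qHom (pHom x) := (hfix x hx).symm
    _ = qHom (pHom y) := by rw [hxy]
    _ = y := hfix y hy
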